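/- For each γ ∈ [0,1] with η = 1 - sqrt(1-γ), the complement of a clique on a (1-η)-fraction of vertices (i.e., the join of an independent set of size floor((1-η)n) with a clique on the remaining vertices) has edge density tending to γ and S_k-density ρ(S_k, G_n) tending to η + (1-η)·η^k. -/

import Mathlib

open Finset

-- The number of edges of a graph on `Fin n`.
open scoped Classical in
noncomputable def ecount {n : ℕ} (G : SimpleGraph (Fin n)) : ℕ :=
  (Finset.univ.filter fun p : Fin n × Fin n => p.1 < p.2 ∧ G.Adj p.1 p.2).card

-- The degree of a vertex.
open scoped Classical in
noncomputable def deg {n : ℕ} (G : SimpleGraph (Fin n)) (v : Fin n) : ℕ :=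
  (Finset.univ.filter fun w => G.Adj v w).card

-- `N(S_k, G) = ∑_v C(d(v), k)`, the number of copies of the `k`-edge star.
noncomputable def starCount {n : ℕ} (G : SimpleGraph (Fin n)) (k : ℕ) : ℕ :=
  ∑ v : Fin n, (deg G v).choose k

-- `ρ(S_k, G) = N(S_k, G)·k!/(n)_{k+1}`, the `S_k`-density of a graph on `n` vertices.
noncomputable def starDensity {n : ℕ} (G : SimpleGraph (Fin n)) (k : ℕ) : ℝ :=
  (starCount G k * k.factorial : ℝ) / (n.descFactorial (k + 1) : ℝ)

-- The complement of a clique with isolated vertices: the vertex set splits into `B`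
-- (the first `⌊η·n⌋` vertices) and `A`; all pairs inside `B` and all pairs between
-- `A` and `B` are edges, and there are no edges inside `A`.
noncomputable def cliqueComplement (n : ℕ) (γ : ℝ) : SimpleGraph (Fin n) :=
  SimpleGraph.fromRel fun v w =>
    v.val < ⌊(1 - Real.sqrt (1 - γ)) * (n : ℝ)⌋₊ ∨
    w.val < ⌊(1 - Real.sqrt (1 - γ)) * (n : ℝ)⌋₊

section Aux

open Filter

lemma card_filter_fin (n : ℕ) (P : ℕ → Prop) [DecidablePred P] :
    (univ.filter fun w : Fin n => P w.val).card = ((Finset.range n).filter P).card := by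
  classical
  rw [← Nat.Iio_eq_range, ← Fin.map_valEmbedding_univ, Finset.filter_map, Finset.card_map]
  rfl

lemma cc_adj {n : ℕ} {γ : ℝ} (v w : Fin n) :
    (cliqueComplement n γ).Adj v w ↔
      v ≠ w ∧ (v.val < ⌊(1 - Real.sqrt (1 - γ)) * (n : ℝ)⌋₊ ∨
        w.val < ⌊(1 - Real.sqrt (1 - γ)) * (n : ℝ)⌋₊) := by
  simp only [cliqueComplement, SimpleGraph.fromRel_adj]
  tauto

lemma deg_cc {n : ℕ} {γ : ℝ}
    (hM : ⌊(1 - Real.sqrt (1 - γ)) * (n : ℝ)⌋₊ ≤ n) (v : Fin n) :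
    deg (cliqueComplement n γ) v =
      if v.val < ⌊(1 - Real.sqrt (1 - γ)) * (n : ℝ)⌋₊ then n - 1
      else ⌊(1 - Real.sqrt (1 - γ)) * (n : ℝ)⌋₊ := by
  classical
  set M := ⌊(1 - Real.sqrt (1 - γ)) * (n : ℝ)⌋₊ with hMdef
  unfold deg
  split_ifs with hv
  · have : (univ.filter fun w : Fin n => (cliqueComplement n γ).Adj v w)
        = univ.filter fun w : Fin n => w ≠ v := by
      apply Finset.filter_congr
      intro w _
      simp only [cc_adj, eq_iff_iff]
      constructor
      · rintro ⟨h, -⟩; exact fun e => h e.symm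
      · intro h; exact ⟨fun e => h e.symm, Or.inl hv⟩
    rw [this, Finset.filter_ne', Finset.card_erase_of_mem (mem_univ v), Finset.card_univ,
      Fintype.card_fin]
  · have : (univ.filter fun w : Fin n => (cliqueComplement n γ).Adj v w)
        = univ.filter fun w : Fin n => w.val < M := by
      apply Finset.filter_congr
      intro w _
      simp only [cc_adj, eq_iff_iff]
      constructor
      · rintro ⟨h, hor⟩
        rcases hor with h1 | h1
        · exact absurd h1 hv
        · exact h1
      · intro h
        refine ⟨fun e => ?_, Or.inr h⟩
        subst e; exact hv h
    rw [this, card_filter_fin n (· < M)]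
    have : (Finset.range n).filter (fun i => i < M) = Finset.range M := by
      ext i; simp only [mem_filter, mem_range]; omega
    rw [this, Finset.card_range]

lemma starCount_cc {n : ℕ} {γ : ℝ} (k : ℕ)
    (hM : ⌊(1 - Real.sqrt (1 - γ)) * (n : ℝ)⌋₊ ≤ n) :
    starCount (cliqueComplement n γ) k =
      ⌊(1 - Real.sqrt (1 - γ)) * (n : ℝ)⌋₊ * (n-1).choose k +
      (n - ⌊(1 - Real.sqrt (1 - γ)) * (n : ℝ)⌋₊) *
        (⌊(1 - Real.sqrt (1 - γ)) * (n : ℝ)⌋₊).choose k := by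
  classical
  set M := ⌊(1 - Real.sqrt (1 - γ)) * (n : ℝ)⌋₊ with hMdef
  unfold starCount
  have : ∀ v : Fin n, (deg (cliqueComplement n γ) v).choose k =
      if v.val < M then (n-1).choose k else M.choose k := by
    intro v; rw [deg_cc hM v]; split_ifs <;> rfl
  rw [Finset.sum_congr rfl (fun v _ => this v)]
  rw [Fin.sum_univ_eq_sum_range (fun i => if i < M then (n-1).choose k else M.choose k)]
  rw [Finset.sum_ite, Finset.sum_const, Finset.sum_const]
  have h1 : ((Finset.range n).filter (fun i => i < M)) = Finset.range M := by
    ext i; simp only [mem_filter, mem_range]; omega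
  have h2 : (((Finset.range n).filter (fun i => ¬ i < M))).card = n - M := by
    have : ((Finset.range n).filter (fun i => ¬ i < M)) = Finset.Ico M n := by
      ext i; simp only [mem_filter, mem_range, mem_Ico]; omega
    rw [this, Nat.card_Ico]
  rw [h1, h2, Finset.card_range, smul_eq_mul, smul_eq_mul]

lemma ecount_cc {n : ℕ} {γ : ℝ}
    (hM : ⌊(1 - Real.sqrt (1 - γ)) * (n : ℝ)⌋₊ ≤ n) :
    ecount (cliqueComplement n γ) =
      ∑ i ∈ Finset.range ⌊(1 - Real.sqrt (1 - γ)) * (n : ℝ)⌋₊, (n - 1 - i) := by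
  classical
  set M := ⌊(1 - Real.sqrt (1 - γ)) * (n : ℝ)⌋₊ with hMdef
  unfold ecount
  rw [Finset.card_eq_sum_card_fiberwise
    (f := Prod.fst) (t := univ) (fun p _ => mem_univ _)]
  have hfiber : ∀ v : Fin n,
      (((univ.filter fun p : Fin n × Fin n =>
          p.1 < p.2 ∧ (cliqueComplement n γ).Adj p.1 p.2)).filter
        fun p => p.1 = v).card
      = if v.val < M then n - 1 - v.val else 0 := by
    intro v
    have hmap : (((univ.filter fun p : Fin n × Fin n =>
          p.1 < p.2 ∧ (cliqueComplement n γ).Adj p.1 p.2)).filter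
        fun p => p.1 = v)
        = (univ.filter fun w : Fin n => v < w ∧ (cliqueComplement n γ).Adj v w).map
            ⟨fun w => (v, w), fun a b h => by simpa using h⟩ := by
      ext ⟨a, b⟩
      simp only [Finset.mem_filter, Finset.mem_map, Finset.mem_univ, true_and,
        Function.Embedding.coeFn_mk, Prod.mk.injEq]
      constructor
      · rintro ⟨⟨h1, h2⟩, rfl⟩
        exact ⟨b, ⟨h1, h2⟩, rfl⟩
      · rintro ⟨w, ⟨h1, h2⟩, rfl, rfl⟩
        exact ⟨⟨h1, h2⟩, rfl⟩
    rw [hmap, Finset.card_map]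
    split_ifs with hv
    · have : (univ.filter fun w : Fin n => v < w ∧ (cliqueComplement n γ).Adj v w)
          = univ.filter fun w : Fin n => v.val < w.val := by
        apply Finset.filter_congr
        intro w _
        simp only [eq_iff_iff, Fin.lt_def]
        constructor
        · rintro ⟨h, -⟩; exact h
        · intro h
          exact ⟨h, (cc_adj v w).2 ⟨fun e => by simp [e] at h, Or.inl hv⟩⟩
      rw [this, card_filter_fin n (v.val < ·)]
      have : ((Finset.range n).filter (fun i => v.val < i)) = Finset.Ico (v.val+1) n := by
        ext i; simp only [mem_filter, mem_range, mem_Ico]; omega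
      rw [this, Nat.card_Ico]
      omega
    · convert Finset.card_empty
      rw [Finset.filter_eq_empty_iff]
      rintro w - ⟨hlt, hadj⟩
      rcases ((cc_adj v w).1 hadj).2 with h | h
      · exact hv h
      · have := Fin.lt_def.1 hlt; omega
  rw [Finset.sum_congr rfl (fun v _ => hfiber v)]
  rw [Fin.sum_univ_eq_sum_range (fun i => if i < M then n - 1 - i else 0)]
  rw [← Finset.sum_filter]
  have h1 : ((Finset.range n).filter (fun i => i < M)) = Finset.range M := by
    ext i; simp only [mem_filter, mem_range]; omega
  rw [h1]

lemma tendsto_floor_div {η : ℝ} (hη : 0 ≤ η) :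
    Tendsto (fun n : ℕ => (⌊η * (n:ℝ)⌋₊ : ℝ) / n) atTop (nhds η) := by
  apply tendsto_of_tendsto_of_tendsto_of_le_of_le'
    (g := fun n : ℕ => η - 1 / (n:ℝ)) (h := fun _ : ℕ => η)
  · simpa using (tendsto_const_nhds (x := η)).sub tendsto_one_div_atTop_nhds_zero_nat
  · exact tendsto_const_nhds
  · filter_upwards [eventually_gt_atTop 0] with n hn
    have hn' : (0:ℝ) < n := by exact_mod_cast hn
    rw [sub_le_iff_le_add, ← add_div, le_div_iff₀ hn']
    nlinarith [Nat.sub_one_lt_floor (η * (n:ℝ))]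
  · filter_upwards [eventually_gt_atTop 0] with n hn
    have hn' : (0:ℝ) < n := by exact_mod_cast hn
    rw [div_le_iff₀ hn']
    exact Nat.floor_le (by positivity)

lemma tendsto_cast_sub_div {x : ℕ → ℕ} {c : ℝ} (i : ℕ)
    (h : Tendsto (fun n : ℕ => (x n : ℝ) / n) atTop (nhds c)) :
    Tendsto (fun n : ℕ => ((x n - i : ℕ) : ℝ) / n) atTop (nhds c) := by
  have hi : Tendsto (fun n : ℕ => (i:ℝ) / n) atTop (nhds 0) := by
    simpa [div_eq_mul_inv] using tendsto_one_div_atTop_nhds_zero_nat.const_mul (i:ℝ)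
  apply tendsto_of_tendsto_of_tendsto_of_le_of_le'
    (g := fun n : ℕ => (x n : ℝ) / n - i / n) (h := fun n : ℕ => (x n : ℝ) / n)
  · simpa using h.sub hi
  · exact h
  · filter_upwards [eventually_gt_atTop 0] with n hn
    have hn' : (0:ℝ) < n := by exact_mod_cast hn
    rw [div_sub_div_same]
    have hle : (x n : ℝ) - i ≤ ((x n - i : ℕ) : ℝ) := by
      rcases le_total i (x n) with h' | h'
      · rw [Nat.cast_sub h']
      · have h1 : x n - i = 0 := by omega
        rw [h1]
        have : (x n : ℝ) ≤ i := by exact_mod_cast h'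
        simp; linarith
    gcongr
  · filter_upwards [eventually_gt_atTop 0] with n hn
    have hn' : (0:ℝ) < n := by exact_mod_cast hn
    have : ((x n - i : ℕ) : ℝ) ≤ x n := by exact_mod_cast Nat.sub_le _ _
    gcongr

lemma tendsto_descFactorial_div {x : ℕ → ℕ} {c : ℝ} (k : ℕ)
    (h : Tendsto (fun n : ℕ => (x n : ℝ) / n) atTop (nhds c)) :
    Tendsto (fun n : ℕ => ((x n).descFactorial k : ℝ) / (n:ℝ)^k) atTop (nhds (c^k)) := by
  have heq : ∀ n : ℕ, ((x n).descFactorial k : ℝ) / (n:ℝ)^k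
      = ∏ i ∈ Finset.range k, ((x n - i : ℕ) : ℝ) / n := by
    intro n
    rw [Finset.prod_div_distrib, Nat.descFactorial_eq_prod_range]
    push_cast
    congr 1
    rw [Finset.prod_const, Finset.card_range]
  simp only [heq]
  have : (c:ℝ)^k = ∏ i ∈ Finset.range k, c := by
    rw [Finset.prod_const, Finset.card_range]
  rw [this]
  exact tendsto_finset_prod _ (fun i _ => tendsto_cast_sub_div i h)

end Aux

/-- With `η = 1 - √(1-γ)`, the complement of a clique on a `(1-η)`-fraction of the
vertices has edge density tending to `γ` and `S_k`-density tending to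
`η + (1-η)·η^k`. -/
theorem cliqueComplement_starDensity (γ : ℝ) (hγ : γ ∈ Set.Icc (0:ℝ) 1) (k : ℕ)
    (hk : 0 < k) :
    Filter.Tendsto (fun n : ℕ => (ecount (cliqueComplement n γ) : ℝ) / (n.choose 2 : ℝ))
      Filter.atTop (nhds γ) ∧
    Filter.Tendsto (fun n : ℕ => starDensity (cliqueComplement n γ) k)
      Filter.atTop
      (nhds ((1 - Real.sqrt (1 - γ)) +
        (1 - (1 - Real.sqrt (1 - γ))) * (1 - Real.sqrt (1 - γ)) ^ k)) := by
  obtain ⟨hγ0, hγ1⟩ := hγ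
  set s : ℝ := Real.sqrt (1 - γ) with hsdef
  set η : ℝ := 1 - s with hηdef
  have hs0 : 0 ≤ s := Real.sqrt_nonneg _
  have hs1 : s ≤ 1 := by
    rw [hsdef]
    exact Real.sqrt_le_one.mpr (by linarith)
  have hs2 : s ^ 2 = 1 - γ := Real.sq_sqrt (by linarith)
  have hη0 : 0 ≤ η := by rw [hηdef]; linarith
  have hη1 : η ≤ 1 := by rw [hηdef]; linarith
  set M : ℕ → ℕ := fun n => ⌊η * (n : ℝ)⌋₊ with hMdef
  have hMn : ∀ n : ℕ, M n ≤ n := by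
    intro n
    have : η * (n:ℝ) ≤ (n:ℝ) := by
      nlinarith [Nat.cast_nonneg (α := ℝ) n]
    calc M n ≤ ⌊(n:ℝ)⌋₊ := Nat.floor_le_floor this
    _ = n := Nat.floor_natCast n
  have hMdiv : Filter.Tendsto (fun n : ℕ => (M n : ℝ) / n) Filter.atTop (nhds η) :=
    tendsto_floor_div hη0
  have hinv : Filter.Tendsto (fun n : ℕ => 1 / (n:ℝ)) Filter.atTop (nhds 0) :=
    tendsto_one_div_atTop_nhds_zero_nat
  have hiddiv : Filter.Tendsto (fun n : ℕ => ((n:ℕ) : ℝ) / n) Filter.atTop (nhds 1) := by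
    apply Filter.Tendsto.congr' _ tendsto_const_nhds
    filter_upwards [Filter.eventually_gt_atTop 0] with n hn
    have hn' : ((n:ℝ)) ≠ 0 := by positivity
    rw [div_self hn']
  have hcompl : Filter.Tendsto (fun n : ℕ => ((n - M n : ℕ) : ℝ) / n) Filter.atTop
      (nhds (1 - η)) := by
    apply Filter.Tendsto.congr' _ (hiddiv.sub hMdiv)
    filter_upwards with n
    rw [Nat.cast_sub (hMn n), sub_div]
  constructor
  · -- edge density part
    have hcast : ∀ n : ℕ, (ecount (cliqueComplement n γ) : ℝ)
        = (M n : ℝ) * ((n:ℝ) - 1) - (M n : ℝ) * ((M n : ℝ) - 1) / 2 := by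
      intro n
      rw [ecount_cc (hMn n)]
      push_cast [Nat.cast_sum]
      have hterm : ∀ i ∈ Finset.range (M n), ((n - 1 - i : ℕ) : ℝ) = (n:ℝ) - 1 - i := by
        intro i hi
        have hi' : i < M n := Finset.mem_range.1 hi
        have : i + 1 ≤ n := by have := hMn n; omega
        have h2 : n - 1 - i = n - (i + 1) := by omega
        rw [h2, Nat.cast_sub this]
        push_cast; ring
      rw [Finset.sum_congr rfl hterm]
      rw [Finset.sum_sub_distrib, Finset.sum_const, Finset.card_range]
      have hgauss : (∑ i ∈ Finset.range (M n), (i:ℝ))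
          = (M n : ℝ) * ((M n : ℝ) - 1) / 2 := by
        have := Finset.sum_range_id_mul_two (M n)
        have hcast : ((∑ i ∈ Finset.range (M n), i : ℕ) : ℝ) * 2
            = (M n : ℝ) * ((M n : ℝ) - 1) := by
          rcases Nat.eq_zero_or_pos (M n) with h | h
          · simp [h]
          · rw [← Nat.cast_ofNat, ← Nat.cast_mul, this, Nat.cast_mul, Nat.cast_sub h]
            push_cast; ring
        push_cast at hcast ⊢
        linarith
      rw [hgauss]
      push_cast
      ring
    have hγeq : ((η - η * 0) - η * (η - 0) / 2) / ((1 * (1 - 0)) / 2) = γ := by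
      rw [hηdef]
      linear_combination -hs2
    have hT : Filter.Tendsto
        (fun n : ℕ =>
          (((M n : ℝ)/n - (M n : ℝ)/n * (1/(n:ℝ))) - (M n : ℝ)/n * ((M n : ℝ)/n - 1/(n:ℝ)) / 2)
          / ((((n:ℝ)/n) * ((n:ℝ)/n - 1/(n:ℝ))) / 2))
        Filter.atTop (nhds (((η - η * 0) - η * (η - 0) / 2) / ((1 * (1 - 0)) / 2))) :=
      Filter.Tendsto.div
        (((hMdiv.sub (hMdiv.mul hinv)).sub (((hMdiv.mul (hMdiv.sub hinv))).div_const 2)))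
        (((hiddiv.mul (hiddiv.sub hinv))).div_const 2) (by norm_num)
    rw [hγeq] at hT
    apply hT.congr'
    filter_upwards [Filter.eventually_ge_atTop 2] with n hn
    have hn0 : ((n:ℝ)) ≠ 0 := by
      have : (0:ℝ) < n := by exact_mod_cast (by omega : 0 < n)
      linarith
    have hn1 : ((n:ℝ)) - 1 ≠ 0 := by
      have : (2:ℝ) ≤ n := by exact_mod_cast hn
      intro h; linarith
    rw [hcast n, Nat.cast_choose_two]
    field_simp
  · -- star density part
    have hsub1 : Filter.Tendsto (fun n : ℕ => ((n - 1 : ℕ) : ℝ) / n) Filter.atTop (nhds 1) :=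
      tendsto_cast_sub_div (x := fun n => n) 1 hiddiv
    have hA : Filter.Tendsto (fun n : ℕ => (((n-1:ℕ)).descFactorial k : ℝ) / (n:ℝ)^k)
        Filter.atTop (nhds 1) := by
      have := tendsto_descFactorial_div (x := fun n : ℕ => n - 1) k hsub1
      rwa [one_pow] at this
    have hB : Filter.Tendsto (fun n : ℕ => ((M n).descFactorial k : ℝ) / (n:ℝ)^k)
        Filter.atTop (nhds (η^k)) := tendsto_descFactorial_div k hMdiv
    have hC : Filter.Tendsto (fun n : ℕ => ((n).descFactorial (k+1) : ℝ) / (n:ℝ)^(k+1))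
        Filter.atTop (nhds 1) := by
      have := tendsto_descFactorial_div (x := fun n : ℕ => n) (k+1) hiddiv
      rwa [one_pow] at this
    have hγeq : (η * 1 + (1 - η) * η^k) / 1 = η + (1 - η) * η ^ k := by ring
    have hT : Filter.Tendsto
        (fun n : ℕ =>
          ((M n : ℝ)/n * ((((n-1:ℕ)).descFactorial k : ℝ) / (n:ℝ)^k)
            + (((n - M n : ℕ):ℝ)/n) * (((M n).descFactorial k : ℝ) / (n:ℝ)^k))
          / (((n).descFactorial (k+1) : ℝ) / (n:ℝ)^(k+1)))
        Filter.atTop (nhds ((η * 1 + (1 - η) * η^k) / 1)) :=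
      Filter.Tendsto.div ((hMdiv.mul hA).add (hcompl.mul hB)) hC (by norm_num)
    rw [hγeq] at hT
    apply hT.congr'
    filter_upwards [Filter.eventually_ge_atTop (k+1)] with n hn
    have hn0 : ((n:ℝ)) ≠ 0 := by
      have : (0:ℝ) < n := by exact_mod_cast (by omega : 0 < n)
      linarith
    have hD0 : ((n.descFactorial (k+1) : ℕ) : ℝ) ≠ 0 := by
      have : n.descFactorial (k+1) ≠ 0 := by
        intro h
        rw [Nat.descFactorial_eq_zero_iff_lt] at h
        omega
      exact_mod_cast this
    unfold starDensity
    rw [starCount_cc k (hMn n)]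
    have hMfloor : ⌊(1 - Real.sqrt (1 - γ)) * (n:ℝ)⌋₊ = M n := rfl
    rw [hMfloor]
    have hnum : ((M n * (n-1).choose k + (n - M n) * (M n).choose k : ℕ) : ℝ)
        * (k.factorial : ℝ)
        = (M n : ℝ) * (((n-1:ℕ)).descFactorial k : ℝ)
          + ((n - M n : ℕ) : ℝ) * (((M n)).descFactorial k : ℝ) := by
      rw [Nat.descFactorial_eq_factorial_mul_choose, Nat.descFactorial_eq_factorial_mul_choose]
      push_cast
      ring
    rw [hnum]
    have hc : ((n:ℝ))^(k+1) ≠ 0 := pow_ne_zero _ hn0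
    rw [div_mul_div_comm, div_mul_div_comm, ← add_div, ← pow_succ']
    rw [div_div_div_comm, div_self hc, div_one]
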